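/- Let k be a field of characteristic p > 0, and let S be a finite set of pairwise inequivalent nontrivial rank-1 valuations of k, with k_v the completion of k at v for v ∈ S. Let f(T) = T + b_1 T^p + ... + b_m T^{p^m} be a p-polynomial with coefficients in k such that m ≥ 1 and b_m ≠ 0. Suppose there exists a nontrivial rank-1 valuation w of k, inequivalent to every valuation in S, whose value group is not p-divisible (some value is not a p-th power in the value group). Then the kernel of the canonical map k/f(k) → ∏_{v∈S} k_v/f(k_v) is infinite; that is, the image in k/f(k) of the set {x ∈ k : x ∈ f(k_v) for every v ∈ S} is an infinite set. -/
import Mathlib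


/-- An absolute value (rank-1 valuation) is nonarchimedean if it satisfies the
ultrametric inequality. -/
def AbsoluteValue.IsNonarch {k : Type} [Field k] (v : AbsoluteValue k ℝ) : Prop :=
  ∀ x y : k, v (x + y) ≤ max (v x) (v y)

/-- An absolute value is nontrivial if it takes a value `≠ 1` on some nonzero element. -/
def AbsoluteValue.IsNontrivial' {k : Type} [Field k] (v : AbsoluteValue k ℝ) : Prop :=
  ∃ x : k, x ≠ 0 ∧ v x ≠ 1

/-- Two absolute values on `k` are equivalent (induce the same topology) iff one is a
positive real power of the other. -/
def AbsoluteValue.IsEquivalent {k : Type} [Field k] (v w : AbsoluteValue k ℝ) : Prop :=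
  ∃ r : ℝ, 0 < r ∧ ∀ x : k, w x = v x ^ r

variable {k : Type} [Field k]

/-- Ultrametric equality: if `w b < w a` then `w (a + b) = w a`. -/
lemma nonarch_add_eq {w : AbsoluteValue k ℝ} (hw : w.IsNonarch) {a b : k}
    (h : w b < w a) : w (a + b) = w a := by
  refine le_antisymm ((hw a b).trans (by rw [max_eq_left h.le])) ?_
  have h2 := hw (a + b) (-b)
  simp only [add_neg_cancel_right, w.map_neg] at h2
  rcases le_max_iff.1 h2 with h3 | h3
  · exact h3
  · exact absurd (lt_of_le_of_lt h3 h) (lt_irrefl _)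

/-- A nonarchimedean absolute value of a finite sum, each term `< D`, is `< D`. -/
lemma nonarch_sum_lt {w : AbsoluteValue k ℝ} (hw : w.IsNonarch) {ι : Type} [DecidableEq ι] {D : ℝ}
    (hD : 0 < D) (s : Finset ι) (f : ι → k) (h : ∀ i ∈ s, w (f i) < D) :
    w (∑ i ∈ s, f i) < D := by
  induction s using Finset.induction_on with
  | empty => simpa using hD
  | @insert a s hx ih =>
    rw [Finset.sum_insert hx]
    exact lt_of_le_of_lt (hw _ _) (max_lt (h a (Finset.mem_insert_self a s))
      (ih fun i hi => h i (Finset.mem_insert_of_mem hi)))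

/-- A nontrivial absolute value takes a value `> 1`. -/
lemma exists_one_lt {w : AbsoluteValue k ℝ} (hw : w.IsNontrivial') : ∃ z : k, 1 < w z := by
  obtain ⟨x, hx0, hx1⟩ := hw
  rcases lt_or_gt_of_ne hx1 with h | h
  · exact ⟨x⁻¹, by rw [map_inv₀]; exact (one_lt_inv₀ (w.pos hx0)).2 h⟩
  · exact ⟨x, h⟩

lemma isEquivalent_symm {v w : AbsoluteValue k ℝ} (h : v.IsEquivalent w) :
    w.IsEquivalent v := by
  obtain ⟨r, hr, h⟩ := h
  refine ⟨r⁻¹, inv_pos.2 hr, fun x => ?_⟩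
  rw [h x, ← Real.rpow_mul (v.nonneg x), mul_inv_cancel₀ (ne_of_gt hr), Real.rpow_one]

/-- Key lemma: if `v, w` are nontrivial and inequivalent, there is `x` with
`v x < 1 ≤ w x`. -/
lemma exists_lt_one_le_one {v w : AbsoluteValue k ℝ} (hv : v.IsNontrivial')
    (hne : ¬ v.IsEquivalent w) : ∃ x : k, v x < 1 ∧ 1 ≤ w x := by
  by_contra hcon
  push_neg at hcon
  -- hcon : ∀ x, v x < 1 → w x < 1
  have h1 : ∀ x : k, v x < 1 → w x < 1 := fun x hx => hcon x hx
  apply hne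
  -- x₀ with v x₀ < 1, x₀ ≠ 0
  obtain ⟨x, hx0, hx1⟩ := hv
  have hx0' : ∃ x₀ : k, x₀ ≠ 0 ∧ v x₀ < 1 := by
    rcases lt_or_gt_of_ne hx1 with h | h
    · exact ⟨x, hx0, h⟩
    · exact ⟨x⁻¹, inv_ne_zero hx0, by rw [map_inv₀]; exact inv_lt_one_of_one_lt₀ h⟩
  obtain ⟨x₀, hx₀0, hx₀1⟩ := hx0'
  have hwx₀ : w x₀ < 1 := h1 x₀ hx₀1
  have hvx₀pos : 0 < v x₀ := v.pos hx₀0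
  have hwx₀pos : 0 < w x₀ := w.pos hx₀0
  -- v x > 1 → w x > 1
  have h2 : ∀ x : k, 1 < v x → 1 < w x := by
    intro x hx
    have hx0 : x ≠ 0 := fun h => by simp [h] at hx; linarith
    have : v x⁻¹ < 1 := by rw [map_inv₀]; exact inv_lt_one_of_one_lt₀ hx
    have := h1 _ this
    rw [map_inv₀] at this
    exact (inv_lt_one_iff₀.1 this).resolve_left (not_le.2 (w.pos hx0))
  -- v x = 1 → w x = 1
  have h3 : ∀ x : k, x ≠ 0 → v x = 1 → w x = 1 := by
    intro x hx0 hx1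
    by_contra hne1
    have hwpos : 0 < w x := w.pos hx0
    have key : ∀ u : k, u ≠ 0 → v u = 1 → ¬ (1 < w u) := by
      intro u hu0 hu1 hwu
      obtain ⟨nn, hnn⟩ := pow_unbounded_of_one_lt ((w x₀)⁻¹) hwu
      have hv : v (u ^ nn * x₀) < 1 := by
        rw [map_mul, map_pow, hu1, one_pow, one_mul]; exact hx₀1
      have hw := h1 _ hv
      rw [map_mul, map_pow] at hw
      rw [inv_lt_iff_one_lt_mul₀ hwx₀pos] at hnn
      nlinarith [pow_pos hwpos nn]
    rcases lt_or_gt_of_ne hne1 with hlt | hgt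
    · exact key x⁻¹ (inv_ne_zero hx0) (by rw [map_inv₀, hx1, inv_one])
        (by rw [map_inv₀]; exact (one_lt_inv₀ hwpos).2 hlt)
    · exact key x hx0 hx1 hgt
  have hlt_iff : ∀ x : k, x ≠ 0 → (v x < 1 ↔ w x < 1) := by
    intro x hx0
    refine ⟨h1 x, fun hwx => ?_⟩
    rcases lt_trichotomy (v x) 1 with h | h | h
    · exact h
    · rw [h3 x hx0 h] at hwx; linarith
    · linarith [h2 x h]
  set C := Real.log (v x₀) with hC
  set D := Real.log (w x₀) with hD
  have hCneg : C < 0 := Real.log_neg hvx₀pos hx₀1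
  have hDneg : D < 0 := Real.log_neg hwx₀pos hwx₀
  set r := D / C with hr
  have hrpos : 0 < r := div_pos_of_neg_of_neg hDneg hCneg
  refine ⟨r, hrpos, fun x => ?_⟩
  rcases eq_or_ne x 0 with rfl | hx0
  · rw [map_zero, map_zero, Real.zero_rpow (ne_of_gt hrpos)]
  have hvpos : 0 < v x := v.pos hx0
  have hwpos : 0 < w x := w.pos hx0
  set A := Real.log (v x) with hA
  set B := Real.log (w x) with hB
  have transfer : ∀ mm nn : ℤ,
      ((mm : ℝ) * A + (nn : ℝ) * C < 0 ↔ (mm : ℝ) * B + (nn : ℝ) * D < 0) := by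
    intro mm nn
    have hy0 : x ^ mm * x₀ ^ nn ≠ 0 :=
      mul_ne_zero (zpow_ne_zero mm hx0) (zpow_ne_zero nn hx₀0)
    have hv : Real.log (v (x ^ mm * x₀ ^ nn)) = (mm : ℝ) * A + (nn : ℝ) * C := by
      rw [map_mul, map_zpow₀, map_zpow₀,
        Real.log_mul (zpow_ne_zero _ (ne_of_gt hvpos)) (zpow_ne_zero _ (ne_of_gt hvx₀pos)),
        Real.log_zpow, Real.log_zpow]
    have hw' : Real.log (w (x ^ mm * x₀ ^ nn)) = (mm : ℝ) * B + (nn : ℝ) * D := by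
      rw [map_mul, map_zpow₀, map_zpow₀,
        Real.log_mul (zpow_ne_zero _ (ne_of_gt hwpos)) (zpow_ne_zero _ (ne_of_gt hwx₀pos)),
        Real.log_zpow, Real.log_zpow]
    rw [← hv, ← hw', Real.log_neg_iff (v.pos hy0), Real.log_neg_iff (w.pos hy0)]
    exact hlt_iff _ hy0
  have hCpos : (0:ℝ) < -C := by linarith
  have hDpos : (0:ℝ) < -D := by linarith
  have keyq : ∀ q : ℚ, (A / (-C) < q ↔ B / (-D) < q) := by
    intro q
    rw [div_lt_iff₀ hCpos, div_lt_iff₀ hDpos]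
    have hqd : (0:ℝ) < (q.den : ℝ) := by exact_mod_cast q.pos
    have hqnum : (q.num : ℝ) = (q : ℝ) * (q.den : ℝ) := by
      rw [Rat.cast_def]; field_simp
    have e1 : ((q.den : ℤ) : ℝ) * A + ((q.num : ℤ) : ℝ) * C
        = (q.den : ℝ) * (A + (q : ℝ) * C) := by push_cast; rw [hqnum]; ring
    have e2 : ((q.den : ℤ) : ℝ) * B + ((q.num : ℤ) : ℝ) * D
        = (q.den : ℝ) * (B + (q : ℝ) * D) := by push_cast; rw [hqnum]; ring
    constructor
    · intro h
      have h' : ((q.den : ℤ) : ℝ) * A + ((q.num : ℤ) : ℝ) * C < 0 := by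
        rw [e1]; exact mul_neg_of_pos_of_neg hqd (by linarith)
      have h2' := (transfer q.den q.num).1 h'
      rw [e2] at h2'
      nlinarith
    · intro h
      have h' : ((q.den : ℤ) : ℝ) * B + ((q.num : ℤ) : ℝ) * D < 0 := by
        rw [e2]; exact mul_neg_of_pos_of_neg hqd (by linarith)
      have h2' := (transfer q.den q.num).2 h'
      rw [e1] at h2'
      nlinarith
  have heq : A / (-C) = B / (-D) := by
    by_contra hne'
    rcases lt_or_gt_of_ne hne' with h | h
    · obtain ⟨q, hq1, hq2⟩ := exists_rat_btwn h
      exact absurd ((keyq q).1 hq1) (not_lt.2 hq2.le)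
    · obtain ⟨q, hq1, hq2⟩ := exists_rat_btwn h
      exact absurd ((keyq q).2 hq1) (not_lt.2 hq2.le)
  have hAD : A * -D = B * -C := (div_eq_div_iff hCpos.ne' hDpos.ne').1 heq
  have hBr : B = A * r := by
    rw [hr, ← mul_div_assoc]
    exact (eq_div_iff (ne_of_lt hCneg)).2 (by nlinarith [hAD])
  have hfin : w x = Real.exp (A * r) := by rw [← hBr, hB, Real.exp_log hwpos]
  rw [hfin, Real.rpow_def_of_pos hvpos, ← hA]

/-- Helper: eventually `C * q^r < ε` for `0 ≤ q < 1`, `0 < ε`. -/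
lemma eventually_mul_pow_lt {C q ε : ℝ} (hq0 : 0 ≤ q) (hq1 : q < 1) (hε : 0 < ε) :
    ∀ᶠ r : ℕ in Filter.atTop, C * q ^ r < ε := by
  have h := (tendsto_pow_atTop_nhds_zero_of_lt_one hq0 hq1).const_mul C
  rw [mul_zero] at h
  exact h.eventually_lt_const hε

/-- Weak approximation, key step: a separating element for `w` against the `v i`. -/
lemma exists_separating {w : AbsoluteValue k ℝ} (hwnt : w.IsNontrivial')
    (hwna : w.IsNonarch) {n : ℕ} (v : Fin n → AbsoluteValue k ℝ)
    (hvna : ∀ i, (v i).IsNonarch) (hvnt : ∀ i, (v i).IsNontrivial')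
    (hne : ∀ i, ¬ w.IsEquivalent (v i)) :
    ∃ z : k, 1 < w z ∧ ∀ i, v i z < 1 := by
  induction n with
  | zero => obtain ⟨z, hz⟩ := exists_one_lt hwnt; exact ⟨z, hz, fun i => i.elim0⟩
  | succ n ih =>
    obtain ⟨z, hz, hzi⟩ := ih (fun i => v i.castSucc) (fun i => hvna _) (fun i => hvnt _)
      (fun i => hne _)
    set vl := v (Fin.last n) with hvl
    -- a `t` with `1 < w t` and `vl t < 1`
    obtain ⟨x, hx1, hx2⟩ := exists_lt_one_le_one hwnt (hne (Fin.last n))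
    obtain ⟨y, hy1, hy2⟩ := exists_lt_one_le_one (hvnt (Fin.last n))
      (fun h => hne (Fin.last n) (isEquivalent_symm h))
    have hx0 : x ≠ 0 := fun h => by rw [h, map_zero] at hx2; linarith
    have hy0 : y ≠ 0 := fun h => by rw [h, map_zero] at hy2; linarith
    have hwt : 1 < w (y / x) := by
      rw [map_div₀]
      rw [lt_div_iff₀ (w.pos hx0)]
      nlinarith [w.pos hx0]
    have hvlt : vl (y / x) < 1 := by
      rw [map_div₀]
      calc vl y / vl x ≤ vl y / 1 := by
            apply div_le_div_of_nonneg_left ?_ ?_ hx2 <;> [exact vl.nonneg y; norm_num]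
        _ < 1 := by rwa [div_one]
    set t := y / x with ht
    have ht0 : t ≠ 0 := div_ne_zero hy0 hx0
    have hz0 : z ≠ 0 := fun h => by rw [h, map_zero] at hz; linarith
    -- conditions on the castSucc places, eventually in r
    have hev : ∀ᶠ r : ℕ in Filter.atTop,
        ∀ j : Fin n, v j.castSucc z ^ r * v j.castSucc t < 1 := by
      rw [Filter.eventually_all]
      intro j
      have := eventually_mul_pow_lt (C := v j.castSucc t) ((v j.castSucc).nonneg z) (hzi j)
        one_pos
      filter_upwards [this] with r hr
      calc v j.castSucc z ^ r * v j.castSucc t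
          = v j.castSucc t * v j.castSucc z ^ r := mul_comm _ _
        _ < 1 := hr
    rcases lt_trichotomy (vl z) 1 with hvlz | hvlz | hvlz
    · refine ⟨z, hz, fun i => ?_⟩
      induction i using Fin.lastCases with
      | last => exact hvlz
      | cast j => exact hzi j
    · -- vl z = 1 : use z^r * t
      obtain ⟨r, hr⟩ := (hev.and (Filter.eventually_ge_atTop 1)).exists
      refine ⟨z ^ r * t, ?_, fun i => ?_⟩
      · rw [map_mul, map_pow]
        nlinarith [one_le_pow₀ hz.le (n := r), hwt]
      · induction i using Fin.lastCases with
        | last => rw [map_mul, map_pow, ← hvl, hvlz, one_pow, one_mul]; exact hvlt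
        | cast j => rw [map_mul, map_pow]; exact hr.1 j
    · -- 1 < vl z : use (z^r / (1 + z^r)) * t
      obtain ⟨r, hr, hr1⟩ := (hev.and (Filter.eventually_ge_atTop 1)).exists
      have hr0 : r ≠ 0 := by omega
      have hwzr : 1 < w (z ^ r) := by rw [map_pow]; exact one_lt_pow₀ hz hr0
      have hwden : w (1 + z ^ r) = w (z ^ r) := by
        rw [add_comm]
        exact nonarch_add_eq hwna (by rw [map_one]; exact hwzr)
      have hden0 : (1 : k) + z ^ r ≠ 0 := fun h => by
        rw [h, map_zero] at hwden; rw [← hwden] at hwzr; linarith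
      have hvlden : vl (1 + z ^ r) = vl (z ^ r) := by
        rw [add_comm]
        exact nonarch_add_eq (hvna _) (by rw [map_one, map_pow]; exact one_lt_pow₀ hvlz hr0)
      have hvjden : ∀ j : Fin n, v j.castSucc (1 + z ^ r) = 1 := by
        intro j
        have : v j.castSucc (z ^ r) < v j.castSucc 1 := by
          rw [map_one, map_pow]
          exact pow_lt_one₀ ((v j.castSucc).nonneg z) (hzi j) hr0
        rw [← (v j.castSucc).map_one]
        exact nonarch_add_eq (hvna _) this
      refine ⟨z ^ r / (1 + z ^ r) * t, ?_, fun i => ?_⟩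
      · rw [map_mul, map_div₀, hwden, div_self (by positivity), one_mul]
        exact hwt
      · induction i using Fin.lastCases with
        | last =>
          rw [map_mul, map_div₀, hvlden, div_self ?_, one_mul]
          · exact hvlt
          · have := vl.pos (pow_ne_zero r hz0); positivity
        | cast j =>
          rw [map_mul, map_div₀, hvjden j, div_one, map_pow]
          exact hr j

/-- Weak approximation: approximate `c` at `w` while being small at all `v i`. -/
lemma weak_approx {w : AbsoluteValue k ℝ} (hwnt : w.IsNontrivial')
    (hwna : w.IsNonarch) {n : ℕ} (v : Fin n → AbsoluteValue k ℝ)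
    (hvna : ∀ i, (v i).IsNonarch) (hvnt : ∀ i, (v i).IsNontrivial')
    (hne : ∀ i, ¬ w.IsEquivalent (v i)) (c : k) {ε : ℝ} (hε : 0 < ε)
    (δ : Fin n → ℝ) (hδ : ∀ i, 0 < δ i) :
    ∃ a : k, w (a - c) < ε ∧ ∀ i, v i a < δ i := by
  rcases eq_or_ne c 0 with rfl | hc
  · exact ⟨0, by simpa using hε, fun i => by simpa using hδ i⟩
  obtain ⟨z, hz, hzi⟩ := exists_separating hwnt hwna v hvna hvnt hne
  have hz0 : z ≠ 0 := fun h => by rw [h, map_zero] at hz; linarith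
  have hwcpos : 0 < w c := w.pos hc
  have hev1 : ∀ᶠ r : ℕ in Filter.atTop, w c * ((w z)⁻¹) ^ r < ε :=
    eventually_mul_pow_lt (by positivity) (inv_lt_one_of_one_lt₀ hz) hε
  have hev2 : ∀ᶠ r : ℕ in Filter.atTop, ∀ i : Fin n, v i c * v i z ^ r < δ i := by
    rw [Filter.eventually_all]
    exact fun i => eventually_mul_pow_lt ((v i).nonneg z) (hzi i) (hδ i)
  obtain ⟨r, ⟨hr1, hr2⟩, hrge⟩ := ((hev1.and hev2).and (Filter.eventually_ge_atTop 1)).exists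
  have hr0 : r ≠ 0 := by omega
  have hwzr : 1 < w (z ^ r) := by rw [map_pow]; exact one_lt_pow₀ hz hr0
  have hwden : w (1 + z ^ r) = w (z ^ r) := by
    rw [add_comm]; exact nonarch_add_eq hwna (by rw [map_one]; exact hwzr)
  have hden0 : (1 : k) + z ^ r ≠ 0 := fun h => by
    rw [h, map_zero] at hwden; rw [← hwden] at hwzr; linarith
  have hviden : ∀ i : Fin n, v i (1 + z ^ r) = 1 := by
    intro i
    have : v i (z ^ r) < v i 1 := by
      rw [map_one, map_pow]; exact pow_lt_one₀ ((v i).nonneg z) (hzi i) hr0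
    rw [← (v i).map_one]
    exact nonarch_add_eq (hvna i) this
  refine ⟨c * (z ^ r / (1 + z ^ r)), ?_, fun i => ?_⟩
  · have heq : c * (z ^ r / (1 + z ^ r)) - c = c * (-(1 / (1 + z ^ r))) := by
      field_simp
      ring
    rw [heq, map_mul, w.map_neg, map_div₀, map_one, hwden, map_pow]
    calc w c * (1 / w z ^ r) = w c * ((w z)⁻¹) ^ r := by
          rw [one_div, inv_pow]
      _ < ε := hr1
  · rw [map_mul, map_div₀, hviden i, div_one, map_pow]
    exact hr2 i

/-- Solvability of `A = y + ∑ B j * y ^ p ^ (j+1)` for `‖A‖` small, in a complete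
normed field of characteristic `p`. -/
lemma solvable_small (p : ℕ) [Fact p.Prime] (K : Type) [NormedField K] [CompleteSpace K]
    [CharP K p] (m : ℕ) (B : Fin m → K) :
    ∃ δ : ℝ, 0 < δ ∧ ∀ A : K, ‖A‖ < δ →
      ∃ y : K, A = y + ∑ j : Fin m, B j * y ^ p ^ (j.1 + 1) := by
  set Sb := ∑ j : Fin m, ‖B j‖ with hSb
  have hSb0 : 0 ≤ Sb := Finset.sum_nonneg fun _ _ => norm_nonneg _
  set r := min (1/2 : ℝ) ((4 * (1 + Sb))⁻¹) with hrdef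
  have hr0 : 0 < r := lt_min (by norm_num) (by positivity)
  have h2r1 : 2 * r ≤ 1 := by
    have : r ≤ 1/2 := min_le_left _ _
    linarith
  have h2r0 : 0 ≤ 2 * r := by linarith
  have hrb : r ≤ (4 * (1 + Sb))⁻¹ := min_le_right _ _
  -- the contraction constant
  set c := ∑ j : Fin m, ‖B j‖ * (2 * r) ^ (p ^ (j.1 + 1) - 1) with hc
  have hexp1 : ∀ j : Fin m, 1 ≤ p ^ (j.1 + 1) := fun j =>
    Nat.one_le_pow _ _ (Fact.out : p.Prime).pos
  have hexp2 : ∀ j : Fin m, 2 ≤ p ^ (j.1 + 1) := fun j =>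
    (Nat.one_lt_pow (Nat.succ_ne_zero _) (Fact.out : p.Prime).one_lt)
  have hterm : ∀ j : Fin m, ‖B j‖ * (2 * r) ^ (p ^ (j.1 + 1) - 1) ≤ ‖B j‖ * (2 * r) := by
    intro j
    apply mul_le_mul_of_nonneg_left _ (norm_nonneg _)
    calc (2 * r) ^ (p ^ (j.1 + 1) - 1) ≤ (2 * r) ^ 1 :=
          pow_le_pow_of_le_one h2r0 h2r1 (by have := hexp2 j; omega)
      _ = 2 * r := pow_one _
  have hcle : c ≤ 1/2 := by
    calc c ≤ ∑ j : Fin m, ‖B j‖ * (2 * r) := Finset.sum_le_sum fun j _ => hterm j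
      _ = Sb * (2 * r) := by rw [hSb, Finset.sum_mul]
      _ ≤ Sb * (2 * (4 * (1 + Sb))⁻¹) := by
          apply mul_le_mul_of_nonneg_left _ hSb0
          linarith
      _ ≤ 1/2 := by
          have h4 : (0:ℝ) < 4 * (1 + Sb) := by positivity
          have hI : (0:ℝ) < (4 * (1 + Sb))⁻¹ := inv_pos.2 h4
          have hinv : (4 * (1 + Sb))⁻¹ * (4 * (1 + Sb)) = 1 := inv_mul_cancel₀ (ne_of_gt h4)
          nlinarith [mul_nonneg hSb0 hI.le]
  have hc0 : 0 ≤ c := Finset.sum_nonneg fun j _ => by positivity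
  refine ⟨r/2, by positivity, fun A hA => ?_⟩
  set g : K → K := fun y => A - ∑ j : Fin m, B j * y ^ p ^ (j.1 + 1) with hg
  -- g maps the closed ball of radius r into itself
  have hsum_le : ∀ y : K, ‖y‖ ≤ r → ‖∑ j : Fin m, B j * y ^ p ^ (j.1 + 1)‖ ≤ c * r := by
    intro y hy
    have hy2 : ‖y‖ ≤ 2 * r := by linarith
    calc ‖∑ j : Fin m, B j * y ^ p ^ (j.1 + 1)‖
        ≤ ∑ j : Fin m, ‖B j * y ^ p ^ (j.1 + 1)‖ := norm_sum_le _ _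
      _ ≤ ∑ j : Fin m, ‖B j‖ * (2 * r) ^ (p ^ (j.1 + 1) - 1) * r := by
          apply Finset.sum_le_sum
          intro j _
          rw [norm_mul, norm_pow, mul_assoc]
          apply mul_le_mul_of_nonneg_left _ (norm_nonneg _)
          calc ‖y‖ ^ p ^ (j.1 + 1) = ‖y‖ ^ (p ^ (j.1 + 1) - 1) * ‖y‖ := by
                rw [← pow_succ]
                congr 1
                have := hexp1 j; omega
            _ ≤ (2 * r) ^ (p ^ (j.1 + 1) - 1) * r := by
                apply mul_le_mul _ hy (norm_nonneg _) (by positivity)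
                exact pow_le_pow_left₀ (norm_nonneg _) hy2 _
      _ = c * r := by rw [hc, Finset.sum_mul]
  have hmaps : ∀ y : K, ‖y‖ ≤ r → ‖g y‖ ≤ r := by
    intro y hy
    calc ‖g y‖ ≤ ‖A‖ + ‖∑ j : Fin m, B j * y ^ p ^ (j.1 + 1)‖ := norm_sub_le _ _
      _ ≤ r/2 + c * r := by
          have := hsum_le y hy
          linarith
      _ ≤ r := by nlinarith
  -- contraction estimate
  have hlip : ∀ y y' : K, ‖y‖ ≤ r → ‖y'‖ ≤ r → ‖g y - g y'‖ ≤ 1/2 * ‖y - y'‖ := by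
    intro y y' hy hy'
    have hdiff : g y - g y' = ∑ j : Fin m, B j * (y' - y) ^ p ^ (j.1 + 1) := by
      rw [hg]
      simp only
      rw [sub_sub_sub_cancel_left, ← Finset.sum_sub_distrib]
      congr 1
      ext j
      rw [sub_pow_char_pow, mul_sub]
    have hyy : ‖y' - y‖ ≤ 2 * r := by
      calc ‖y' - y‖ ≤ ‖y'‖ + ‖y‖ := norm_sub_le _ _
        _ ≤ 2 * r := by linarith
    calc ‖g y - g y'‖ = ‖∑ j : Fin m, B j * (y' - y) ^ p ^ (j.1 + 1)‖ := by rw [hdiff]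
      _ ≤ ∑ j : Fin m, ‖B j * (y' - y) ^ p ^ (j.1 + 1)‖ := norm_sum_le _ _
      _ ≤ ∑ j : Fin m, ‖B j‖ * (2 * r) ^ (p ^ (j.1 + 1) - 1) * ‖y' - y‖ := by
          apply Finset.sum_le_sum
          intro j _
          rw [norm_mul, norm_pow, mul_assoc]
          apply mul_le_mul_of_nonneg_left _ (norm_nonneg _)
          calc ‖y' - y‖ ^ p ^ (j.1 + 1) = ‖y' - y‖ ^ (p ^ (j.1 + 1) - 1) * ‖y' - y‖ := by
                rw [← pow_succ]
                congr 1
                have := hexp1 j; omega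
            _ ≤ (2 * r) ^ (p ^ (j.1 + 1) - 1) * ‖y' - y‖ := by
                apply mul_le_mul_of_nonneg_right _ (norm_nonneg _)
                exact pow_le_pow_left₀ (norm_nonneg _) hyy _
      _ = c * ‖y' - y‖ := by rw [hc, Finset.sum_mul]
      _ ≤ 1/2 * ‖y' - y‖ := mul_le_mul_of_nonneg_right hcle (norm_nonneg _)
      _ = 1/2 * ‖y - y'‖ := by rw [norm_sub_rev]
  -- Banach fixed point on the closed ball
  haveI : CompleteSpace (Metric.closedBall (0 : K) r) :=
    Metric.isClosed_closedBall.completeSpace_coe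
  haveI : Nonempty (Metric.closedBall (0 : K) r) := ⟨⟨0, by
    simp [Metric.mem_closedBall, hr0.le]⟩⟩
  have hmem : ∀ y : Metric.closedBall (0 : K) r, ‖(y : K)‖ ≤ r := fun y => by
    have h := y.2
    rwa [Metric.mem_closedBall, dist_zero_right] at h
  set G : Metric.closedBall (0 : K) r → Metric.closedBall (0 : K) r := fun y => ⟨g y.1, by
    rw [Metric.mem_closedBall, dist_zero_right]
    exact hmaps y.1 (hmem y)⟩ with hG
  have hcontr : ContractingWith (1/2 : NNReal) G := by
    constructor
    · rw [← NNReal.coe_lt_coe]; norm_num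
    · apply LipschitzWith.of_dist_le_mul
      intro a b
      rw [Subtype.dist_eq, Subtype.dist_eq, dist_eq_norm, dist_eq_norm]
      have : ((1/2 : NNReal) : ℝ) = 1/2 := by norm_num
      rw [this]
      exact hlip a.1 b.1 (hmem a) (hmem b)
  have hfix := hcontr.fixedPoint_isFixedPt
  set y := hcontr.fixedPoint G with hy
  have hfix' : g y.1 = y.1 := congrArg Subtype.val hfix
  refine ⟨y.1, ?_⟩
  rw [hg] at hfix'
  linear_combination hfix'


/-- Evaluation of the `p`-polynomial `f(T) = T + b 1 * T^p + ⋯ + b m * T^(p^m)`,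
as an additive group homomorphism of a commutative ring of characteristic `p`. -/
noncomputable def pPolyHom (k : Type) [CommRing k] (p : ℕ) [Fact p.Prime] [CharP k p]
    (m : ℕ) (b : Fin m → k) : k →+ k where
  toFun x := x + ∑ i : Fin m, b i * x ^ p ^ (i.1 + 1)
  map_zero' := by
    have h0 : ∀ i : Fin m, (0 : k) ^ p ^ (i.1 + 1) = 0 :=
      fun i => zero_pow (pow_ne_zero _ (Nat.Prime.ne_zero Fact.out))
    simp [h0]
  map_add' x y := by
    simp only [add_pow_char_pow, mul_add, Finset.sum_add_distrib]
    ring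

lemma pPolyHom_apply (k : Type) [CommRing k] (p : ℕ) [Fact p.Prime] [CharP k p]
    (m : ℕ) (b : Fin m → k) (y : k) :
    pPolyHom k p m b y = y + ∑ i : Fin m, b i * y ^ p ^ (i.1 + 1) := rfl

/-- Let `k` be a field of characteristic `p > 0`, let `v 1, …, v n` be finitely many
pairwise inequivalent nontrivial rank-1 valuations of `k` with completions `K i`, and
let `f(T) = T + b 1 * T^p + ⋯ + b m * T^(p^m)` be a `p`-polynomial over `k` with
`m ≥ 1` and `b m ≠ 0`.  If `k` carries a further nontrivial rank-1 valuation `w`,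
inequivalent to all the `v i`, whose value group is not `p`-divisible, then the kernel
of the canonical map `k/f(k) → ∏ i, K i / f(K i)` is infinite: the image in `k/f(k)` of
`{a : k | a ∈ f(K i) for all i}` is an infinite set. -/
theorem pPolynomial_localization_kernel_infinite
    (p : ℕ) [Fact p.Prime] (k : Type) [Field k] [CharP k p]
    (n : ℕ) (v : Fin n → AbsoluteValue k ℝ)
    (hna : ∀ i, (v i).IsNonarch) (hnt : ∀ i, (v i).IsNontrivial')
    (hpairwise : ∀ i j, i ≠ j → ¬ (v i).IsEquivalent (v j))
    (K : Fin n → Type) [∀ i, NormedField (K i)] [∀ i, CompleteSpace (K i)]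
    (emb : ∀ i, k →+* K i)
    (hisom : ∀ i, ∀ x : k, ‖emb i x‖ = v i x)
    (hdense : ∀ i, DenseRange (emb i))
    (m : ℕ) (hm : 0 < m) (b : Fin m → k)
    (hbm : b ⟨m - 1, Nat.sub_lt hm Nat.one_pos⟩ ≠ 0)
    (w : AbsoluteValue k ℝ) (hwna : w.IsNonarch) (hwnt : w.IsNontrivial')
    (hwv : ∀ i, ¬ w.IsEquivalent (v i))
    (hwnondiv : ∃ x : k, x ≠ 0 ∧ ∀ y : k, y ≠ 0 → w x ≠ w y ^ p) :
    Set.Infinite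
      ((QuotientAddGroup.mk' (pPolyHom k p m b).range) ''
        {a : k | ∀ i, ∃ y : K i,
          emb i a = y + ∑ j : Fin m, emb i (b j) * y ^ p ^ (j.1 + 1)}) := by
  have hp2 : 2 ≤ p := (Fact.out : p.Prime).two_le
  have hppos : 0 < p := by omega
  -- solvability radii in the completions
  have hsolv : ∀ i : Fin n, ∃ δ : ℝ, 0 < δ ∧ ∀ A : K i, ‖A‖ < δ →
      ∃ y : K i, A = y + ∑ j : Fin m, emb i (b j) * y ^ p ^ (j.1 + 1) := by
    intro i
    haveI : CharP (K i) p := charP_of_injective_ringHom (emb i).injective p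
    exact solvable_small p (K i) m (fun j => emb i (b j))
  choose δ hδ0 hδ using hsolv
  -- basic data
  obtain ⟨z₁, hz₁⟩ := exists_one_lt hwnt
  have hz₁0 : z₁ ≠ 0 := fun h => by rw [h, map_zero] at hz₁; linarith
  obtain ⟨x₀, hx₀0, hx₀⟩ := hwnondiv
  set jm : Fin m := ⟨m - 1, Nat.sub_lt hm Nat.one_pos⟩ with hjm
  set bm := b jm with hbmdef
  have hwbm : 0 < w bm := w.pos hbm
  have hwx₀ : 0 < w x₀ := w.pos hx₀0
  have hpm : jm.1 + 1 = m := by simp [hjm]; omega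
  -- target values
  set c : ℕ → k := fun t => bm * x₀ * z₁ ^ (p * t) with hcdef
  have hwc : ∀ t, w (c t) = w bm * w x₀ * (w z₁) ^ (p * t) := by
    intro t; rw [hcdef]; simp [map_mul, map_pow]
  have hwcpos : ∀ t, 0 < w (c t) := by
    intro t; rw [hwc]; positivity
  have hwcmono : ∀ s t : ℕ, s < t → w (c s) < w (c t) := by
    intro s t hst
    rw [hwc, hwc]
    have h : (w z₁) ^ (p * s) < (w z₁) ^ (p * t) :=
      pow_lt_pow_right₀ hz₁ ((Nat.mul_lt_mul_left hppos).2 hst)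
    exact mul_lt_mul_of_pos_left h (mul_pos hwbm hwx₀)
  -- bounds R, T
  set Sw := ∑ j : Fin m, w (b j) with hSw
  have hSw0 : 0 ≤ Sw := Finset.sum_nonneg fun j _ => (w.nonneg _)
  have hSwj : ∀ j : Fin m, w (b j) ≤ Sw :=
    fun j => Finset.single_le_sum (fun j _ => w.nonneg (b j)) (Finset.mem_univ j)
  set R := max 1 ((1 + Sw) / w bm) with hRdef
  have hR1 : 1 ≤ R := le_max_left _ _
  have hR0 : 0 < R := lt_of_lt_of_le one_pos hR1
  have hRb : (1 + Sw) / w bm ≤ R := le_max_right _ _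
  have hRbm : 1 + Sw ≤ w bm * R := by
    rw [div_le_iff₀ hwbm] at hRb
    linarith
  set T := (1 + Sw) * R ^ (p ^ m) with hTdef
  -- pick t₀ with T < w (c t)  for all t > t₀
  obtain ⟨t₀, ht₀⟩ : ∃ t₀ : ℕ, T < w (c t₀) := by
    obtain ⟨N, hN⟩ := pow_unbounded_of_one_lt (T / (w bm * w x₀)) hz₁
    refine ⟨N, ?_⟩
    rw [hwc]
    rw [div_lt_iff₀ (by positivity)] at hN
    have hNp : (w z₁) ^ N ≤ (w z₁) ^ (p * N) :=
      pow_le_pow_right₀ hz₁.le (Nat.le_mul_of_pos_left N hppos)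
    calc T < w z₁ ^ N * (w bm * w x₀) := hN
      _ ≤ w z₁ ^ (p * N) * (w bm * w x₀) := by
          apply mul_le_mul_of_nonneg_right hNp (by positivity)
      _ = w bm * w x₀ * w z₁ ^ (p * N) := by ring
  -- approximants
  have happrox : ∀ t : ℕ, ∃ a : k, w (a - c t) < w (c t) ∧ ∀ i, v i a < δ i :=
    fun t => weak_approx hwnt hwna v hna hnt hwv (c t) (hwcpos t) δ hδ0
  choose a ha1 ha2 using happrox
  -- membership in the set
  have hmem : ∀ t : ℕ, a t ∈ {a : k | ∀ i, ∃ y : K i,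
      emb i a = y + ∑ j : Fin m, emb i (b j) * y ^ p ^ (j.1 + 1)} := by
    intro t i
    apply hδ i
    rw [hisom i]
    exact ha2 t i
  -- value of differences
  have hdiff : ∀ s t : ℕ, s < t → w (a t - a s) = w (c t) := by
    intro s t hst
    have hu : a t - a s = c t + ((a t - c t) - (a s - c s) - c s) := by ring
    rw [hu]
    apply nonarch_add_eq hwna
    have h1 : w ((a t - c t) - (a s - c s)) < w (c t) := by
      have := hwna (a t - c t) (-(a s - c s))
      rw [w.map_neg] at this
      have h2 : (a t - c t) - (a s - c s) = (a t - c t) + (-(a s - c s)) := by ring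
      rw [h2]
      exact lt_of_le_of_lt this (max_lt (ha1 t) (lt_trans (ha1 s) (hwcmono s t hst)))
    have h3 := hwna ((a t - c t) - (a s - c s)) (-(c s))
    rw [w.map_neg] at h3
    have h4 : (a t - c t) - (a s - c s) - c s
        = ((a t - c t) - (a s - c s)) + (-(c s)) := by ring
    rw [h4]
    exact lt_of_le_of_lt h3 (max_lt h1 (hwcmono s t hst))
  -- differences are not in the range of the p-polynomial
  have hnotin : ∀ s t : ℕ, t₀ ≤ s → s < t →
      a t - a s ∉ (pPolyHom k p m b).range := by
    intro s t hs hst hmemr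
    obtain ⟨y, hy⟩ := AddMonoidHom.mem_range.1 hmemr
    have hwct : T < w (c t) := lt_trans ht₀ (hwcmono t₀ t (by omega))
    have hy0 : y ≠ 0 := by
      intro h
      rw [h, map_zero] at hy
      have := hwcpos t
      rw [← hdiff s t hst, ← hy, map_zero] at this
      exact lt_irrefl _ this
    rw [pPolyHom_apply] at hy
    have hfy : w (y + ∑ j : Fin m, b j * y ^ p ^ (j.1 + 1)) = w (c t) := by
      rw [hy]; exact hdiff s t hst
    -- W := w y ;  first, W > R
    set W := w y with hWdef
    have hW0 : 0 < W := w.pos hy0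
    have hpmne : p ^ m ≠ 0 := pow_ne_zero _ (by omega)
    have hWR : R < W := by
      by_contra hWR
      push_neg at hWR
      -- then w (f y) ≤ T, contradiction
      have hb1 : W ≤ R ^ (p ^ m) := le_trans hWR (le_self_pow₀ hR1 hpmne)
      have hb2 : ∀ j : Fin m, w (b j * y ^ p ^ (j.1 + 1)) ≤ w (b j) * R ^ (p ^ m) := by
        intro j
        rw [map_mul, map_pow]
        apply mul_le_mul_of_nonneg_left _ (w.nonneg _)
        calc W ^ p ^ (j.1 + 1) ≤ R ^ p ^ (j.1 + 1) :=
              pow_le_pow_left₀ hW0.le hWR _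
          _ ≤ R ^ (p ^ m) :=
              pow_le_pow_right₀ hR1 (Nat.pow_le_pow_right (by omega) (by omega))
      have hble : w (y + ∑ j : Fin m, b j * y ^ p ^ (j.1 + 1)) ≤ T := by
        calc w (y + ∑ j : Fin m, b j * y ^ p ^ (j.1 + 1))
            ≤ W + w (∑ j : Fin m, b j * y ^ p ^ (j.1 + 1)) := w.add_le _ _
          _ ≤ W + ∑ j : Fin m, w (b j * y ^ p ^ (j.1 + 1)) := by
              have := w.sum_le Finset.univ (fun j : Fin m => b j * y ^ p ^ (j.1 + 1))
              linarith
          _ ≤ R ^ (p ^ m) + ∑ j : Fin m, w (b j) * R ^ (p ^ m) := by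
              have := Finset.sum_le_sum (fun j (_ : j ∈ Finset.univ) => hb2 j)
              linarith
          _ = T := by rw [hTdef, ← Finset.sum_mul, ← hSw]; ring
      rw [hfy] at hble
      linarith
    have hW1 : 1 < W := lt_of_le_of_lt hR1 hWR
    have hbmW : 1 + Sw < w bm * W := by
      calc 1 + Sw ≤ w bm * R := hRbm
        _ < w bm * W := mul_lt_mul_of_pos_left hWR hwbm
    -- dominant term analysis
    set D := w bm * W ^ (p ^ m) with hDdef
    have hD0 : 0 < D := by positivity
    -- each non-leading term is < D
    have hterm : ∀ j : Fin m, j ≠ jm → w (b j * y ^ p ^ (j.1 + 1)) < D := by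
      intro j hj
      rw [map_mul, map_pow, ← hWdef]
      have hjlt : j.1 + 1 < m := by
        have h1 : j.1 < m := j.2
        have h2 : j.1 ≠ m - 1 := fun h => hj (Fin.ext (by simp [hjm, h]))
        omega
      have he : p ^ (j.1 + 1) < p ^ m := Nat.pow_lt_pow_right (by omega) hjlt
      have hsplit : W ^ (p ^ m) = W ^ (p ^ m - p ^ (j.1 + 1)) * W ^ p ^ (j.1 + 1) := by
        rw [← pow_add]
        congr 1
        omega
      have hWe : W ≤ W ^ (p ^ m - p ^ (j.1 + 1)) := le_self_pow₀ hW1.le (by omega)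
      have hWp0 : (0:ℝ) < W ^ p ^ (j.1 + 1) := by positivity
      calc w (b j) * W ^ p ^ (j.1 + 1) ≤ Sw * W ^ p ^ (j.1 + 1) :=
            mul_le_mul_of_nonneg_right (hSwj j) hWp0.le
        _ < (w bm * W) * W ^ p ^ (j.1 + 1) := by nlinarith
        _ ≤ (w bm * W ^ (p ^ m - p ^ (j.1 + 1))) * W ^ p ^ (j.1 + 1) := by
            apply mul_le_mul_of_nonneg_right _ hWp0.le
            exact mul_le_mul_of_nonneg_left hWe hwbm.le
        _ = D := by rw [hDdef, hsplit]; ring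
    have hterm0 : W < D := by
      have hsplit : W ^ (p ^ m) = W ^ (p ^ m - 1) * W := by
        rw [← pow_succ]
        congr 1
        have : 1 ≤ p ^ m := Nat.one_le_pow _ _ (by omega)
        omega
      have hWe : W ≤ W ^ (p ^ m - 1) := by
        apply le_self_pow₀ hW1.le
        have : 2 ≤ p ^ m := by
          calc 2 ≤ p := hp2
            _ = p ^ 1 := (pow_one p).symm
            _ ≤ p ^ m := Nat.pow_le_pow_right (by omega) hm
        omega
      calc W < (w bm * W) * W := by nlinarith
        _ ≤ (w bm * W ^ (p ^ m - 1)) * W := by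
            apply mul_le_mul_of_nonneg_right _ hW0.le
            exact mul_le_mul_of_nonneg_left hWe hwbm.le
        _ = D := by rw [hDdef, hsplit]; ring
    -- split off the leading term
    have hsplitsum : y + ∑ j : Fin m, b j * y ^ p ^ (j.1 + 1)
        = bm * y ^ (p ^ m) + (y + ∑ j ∈ Finset.univ.erase jm, b j * y ^ p ^ (j.1 + 1)) := by
      rw [← Finset.add_sum_erase _ _ (Finset.mem_univ jm), ← hbmdef, hpm]
      ring
    have hleadval : w (bm * y ^ (p ^ m)) = D := by
      rw [map_mul, map_pow, ← hWdef, hDdef]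
    have hrest : w (y + ∑ j ∈ Finset.univ.erase jm, b j * y ^ p ^ (j.1 + 1)) < D := by
      have hsum : w (∑ j ∈ Finset.univ.erase jm, b j * y ^ p ^ (j.1 + 1)) < D := by
        apply nonarch_sum_lt hwna hD0
        intro j hjmem
        exact hterm j (Finset.ne_of_mem_erase hjmem)
      exact lt_of_le_of_lt (hwna _ _) (max_lt hterm0 hsum)
    have hDeq : D = w (c t) := by
      rw [← hfy, hsplitsum, nonarch_add_eq hwna (by rw [hleadval]; exact hrest), hleadval]
    -- extract the contradiction with non-p-divisibility
    have hxeq : w x₀ * (w z₁) ^ (p * t) = W ^ (p ^ m) := by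
      have h := hDeq
      rw [hwc t, hDdef] at h
      have h2 : w bm * W ^ (p ^ m) = w bm * (w x₀ * (w z₁) ^ (p * t)) := by
        rw [h]; ring
      exact (mul_left_cancel₀ (ne_of_gt hwbm) h2).symm
    have hfinal : w x₀ = (w (y ^ (p ^ (m - 1)) / z₁ ^ t)) ^ p := by
      rw [map_div₀, map_pow, map_pow, ← hWdef, div_pow, ← pow_mul, ← pow_mul]
      have e1 : p ^ (m - 1) * p = p ^ m := by
        have hmm : m - 1 + 1 = m := by omega
        rw [← pow_succ, hmm]
      have e2 : t * p = p * t := mul_comm _ _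
      have hz1p : (0:ℝ) < (w z₁) ^ (p * t) := by positivity
      rw [e1, e2, ← hxeq, mul_div_assoc, div_self (ne_of_gt hz1p), mul_one]
    exact hx₀ _ (div_ne_zero (pow_ne_zero _ hy0) (pow_ne_zero _ hz₁0)) hfinal
  -- conclusion: infinitely many distinct classes
  have key : ∀ s t : ℕ, s < t →
      (QuotientAddGroup.mk' (pPolyHom k p m b).range) (a (t₀ + 1 + s)) ≠
      (QuotientAddGroup.mk' (pPolyHom k p m b).range) (a (t₀ + 1 + t)) := by
    intro s t hst heq
    rw [QuotientAddGroup.mk'_eq_mk'] at heq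
    obtain ⟨z, hzmem, hzeq⟩ := heq
    apply hnotin (t₀ + 1 + s) (t₀ + 1 + t) (by omega) (by omega)
    have hz : z = a (t₀ + 1 + t) - a (t₀ + 1 + s) := eq_sub_of_add_eq' hzeq
    exact hz ▸ hzmem
  refine Set.infinite_of_injective_forall_mem
    (f := fun t : ℕ => (QuotientAddGroup.mk' (pPolyHom k p m b).range) (a (t₀ + 1 + t)))
    ?_ ?_
  · intro t s heq
    by_contra hne
    rcases lt_or_gt_of_ne hne with h | h
    · exact key t s h heq
    · exact key s t h heq.symm
  · intro t
    exact ⟨a (t₀ + 1 + t), hmem _, rfl⟩
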